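/- Let 1 < r ≤ 2 and let α₁, α₂, b₁, b₂ ≥ 0 satisfy α₁ + α₂ > 2/r and b₁ + b₂ > 1/r. Then there is a constant C such that ‖uv‖_{H^r_{0,0}} ≤ C ‖u‖_{H^r_{α₁,b₁}} ‖v‖_{H^r_{α₂,b₂}} for all Schwartz functions u, v on ℝ^{1+2}. -/

import Mathlib

noncomputable section
open MeasureTheory Real
open scoped ENNReal NNReal FourierTransform

/-- Space-time `ℝ^{1+2}`: coordinate `0` is time, coordinates `1,2` are space. -/
abbrev SpaceTime : Type := EuclideanSpace ℝ (Fin 3)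

/-- Japanese bracket `⟨t⟩ = (1+t²)^{1/2}`. -/
def jap (t : ℝ) : ℝ := (1 + t ^ 2) ^ ((1 : ℝ) / 2)

/-- The norm `|ξ|` of the spatial part of a space-time frequency. -/
def spNorm (z : SpaceTime) : ℝ := Real.sqrt (z 1 ^ 2 + z 2 ^ 2)

/-- The dual exponent `r' = r/(r-1)` as an extended nonnegative real. -/
def dualExp (r : ℝ) : ℝ≥0∞ := ENNReal.ofReal (r / (r - 1))

/-- The wave-Sobolev norm `‖u‖_{H^r_{s,b}} = ‖⟨ξ⟩^s ⟨|τ|-|ξ|⟩^b ũ(τ,ξ)‖_{L^{r'}}`. -/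
def HNorm (r s b : ℝ) (u : SpaceTime → ℂ) : ℝ≥0∞ :=
  eLpNorm (fun z => ((jap (spNorm z) ^ s * jap (|z 0| - spNorm z) ^ b : ℝ) : ℂ) *
    𝓕 u z) (dualExp r) volume

/-- `‖u‖_{X^r_{s,b,±}} = ‖⟨ξ⟩^s ⟨τ ± |ξ|⟩^b ũ(τ,ξ)‖_{L^{r'}}`, with `sgn = ±1`. -/
def XNorm (r s b sgn : ℝ) (u : SpaceTime → ℂ) : ℝ≥0∞ :=
  eLpNorm (fun z => ((jap (spNorm z) ^ s * jap (z 0 + sgn * spNorm z) ^ b : ℝ) : ℂ) *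
    𝓕 u z) (dualExp r) volume


lemma one_add_sq_pos (t : ℝ) : 0 < 1 + t ^ 2 := by positivity

lemma jap_pos (t : ℝ) : 0 < jap t := Real.rpow_pos_of_pos (one_add_sq_pos t) _

lemma one_le_jap (t : ℝ) : 1 ≤ jap t := by
  have : (1:ℝ) = (1:ℝ) ^ ((1:ℝ)/2) := (Real.one_rpow _).symm
  rw [this, jap]
  exact Real.rpow_le_rpow one_pos.le (by nlinarith [sq_nonneg t]) (by norm_num)

lemma jap_neg (t : ℝ) : jap (-t) = jap t := by simp [jap]

lemma jap_mono {s t : ℝ} (h : |s| ≤ |t|) : jap s ≤ jap t := by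
  unfold jap
  apply Real.rpow_le_rpow (one_add_sq_pos s).le _ (by norm_num)
  nlinarith [abs_nonneg s, sq_abs s, sq_abs t]

lemma continuous_jap : Continuous jap := by
  apply Continuous.rpow_const (by fun_prop)
  intro t; exact Or.inl (one_add_sq_pos t).ne'

lemma continuous_jap_rpow (β : ℝ) : Continuous fun t => jap t ^ (-β) := by
  apply Continuous.rpow_const continuous_jap
  intro t; exact Or.inl (jap_pos t).ne'

/-- antitone power for junk -/
lemma rpow_neg_le_rpow_neg {a b : ℝ} (ha : 1 ≤ a) (hab : a ≤ b) {β : ℝ} (hβ : 0 ≤ β) :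
    b ^ (-β) ≤ a ^ (-β) := by
  rw [Real.rpow_neg (by linarith), Real.rpow_neg (by linarith)]
  apply inv_anti₀ (Real.rpow_pos_of_pos (by linarith) _)
  exact Real.rpow_le_rpow (by linarith) hab hβ

/-- min trick -/
lemma jap_prod_le {β₁ β₂ : ℝ} (h1 : 0 ≤ β₁) (h2 : 0 ≤ β₂) (s t : ℝ) :
    jap s ^ (-β₁) * jap t ^ (-β₂) ≤ jap s ^ (-(β₁ + β₂)) + jap t ^ (-(β₁ + β₂)) := by
  rcases le_total (jap s) (jap t) with h | h
  · have : jap t ^ (-β₂) ≤ jap s ^ (-β₂) := rpow_neg_le_rpow_neg (one_le_jap s) h h2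
    calc jap s ^ (-β₁) * jap t ^ (-β₂) ≤ jap s ^ (-β₁) * jap s ^ (-β₂) := by
          apply mul_le_mul_of_nonneg_left this (Real.rpow_nonneg (jap_pos s).le _)
      _ = jap s ^ (-(β₁ + β₂)) := by
          rw [← Real.rpow_add (jap_pos s)]; ring_nf
      _ ≤ _ := le_add_of_nonneg_right (Real.rpow_nonneg (jap_pos t).le _)
  · have : jap s ^ (-β₁) ≤ jap t ^ (-β₁) := rpow_neg_le_rpow_neg (one_le_jap t) h h1
    calc jap s ^ (-β₁) * jap t ^ (-β₂) ≤ jap t ^ (-β₁) * jap t ^ (-β₂) := by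
          apply mul_le_mul_of_nonneg_right this (Real.rpow_nonneg (jap_pos t).le _)
      _ = jap t ^ (-(β₁ + β₂)) := by
          rw [← Real.rpow_add (jap_pos t)]; ring_nf
      _ ≤ _ := le_add_of_nonneg_left (Real.rpow_nonneg (jap_pos s).le _)

/-- splitting the absolute value -/
lemma jap_abs_le {β : ℝ} (t a : ℝ) :
    jap (|t| - a) ^ (-β) ≤ jap (t - a) ^ (-β) + jap (t + a) ^ (-β) := by
  rcases le_total 0 t with h | h
  · rw [abs_of_nonneg h]
    exact le_add_of_nonneg_right (Real.rpow_nonneg (jap_pos _).le _)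
  · rw [abs_of_nonpos h]
    have : jap (-t - a) = jap (t + a) := by rw [show -t - a = -(t+a) by ring, jap_neg]
    rw [this]
    exact le_add_of_nonneg_left (Real.rpow_nonneg (jap_pos _).le _)

/-- integrability of jap power, 1D -/
lemma jap_rpow_eq (t β : ℝ) : jap t ^ (-β) = (1 + t ^ 2) ^ (-β / 2) := by
  rw [jap, ← Real.rpow_mul (one_add_sq_pos t).le]
  ring_nf

lemma lintegral_jap_1d {β : ℝ} (hβ : 1 < β) :
    ∫⁻ t : ℝ, ENNReal.ofReal (jap t ^ (-β)) < ∞ := by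
  have h := integrable_rpow_neg_one_add_norm_sq (E := ℝ) (μ := volume)
    (r := β) (by simpa using hβ)
  have h2 : Integrable (fun t : ℝ => jap t ^ (-β)) volume := by
    convert h using 2 with t
    rw [jap_rpow_eq, Real.norm_eq_abs, sq_abs]
  exact h2.lintegral_lt_top

lemma lintegral_jap_shift (β p : ℝ) :
    ∫⁻ t : ℝ, ENNReal.ofReal (jap (t - p) ^ (-β)) =
      ∫⁻ t : ℝ, ENNReal.ofReal (jap t ^ (-β)) :=
  lintegral_sub_right_eq_self (fun t => ENNReal.ofReal (jap t ^ (-β))) p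

/-- uniform 1D estimate -/
lemma tau_lemma {β₁ β₂ : ℝ} (h1 : 0 ≤ β₁) (h2 : 0 ≤ β₂) (hs : 1 < β₁ + β₂) :
    ∃ K : ℝ≥0∞, K < ∞ ∧ ∀ a c d : ℝ,
      ∫⁻ τ : ℝ, ENNReal.ofReal (jap (|τ| - a) ^ (-β₁) * jap (|c - τ| - d) ^ (-β₂)) ≤ K := by
  set s := β₁ + β₂ with hsdef
  set I := ∫⁻ t : ℝ, ENNReal.ofReal (jap t ^ (-s)) with hI
  have hIfin : I < ∞ := lintegral_jap_1d hs
  refine ⟨8 * I, by finiteness, fun a c d => ?_⟩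
  have hmeas : Measurable fun t : ℝ => ENNReal.ofReal (jap t ^ (-s)) :=
    (ENNReal.measurable_ofReal.comp (continuous_jap_rpow s).measurable)
  -- pointwise bound
  have hpt : ∀ τ : ℝ, jap (|τ| - a) ^ (-β₁) * jap (|c - τ| - d) ^ (-β₂) ≤
      2 * (jap (τ - a) ^ (-s) + jap (τ + a) ^ (-s) +
        jap (τ - (c + d)) ^ (-s) + jap (τ - (c - d)) ^ (-s)) := by
    intro τ
    have nn : ∀ x : ℝ, 0 ≤ jap x ^ (-β₁) := fun x => Real.rpow_nonneg (jap_pos x).le _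
    have nn2 : ∀ x : ℝ, 0 ≤ jap x ^ (-β₂) := fun x => Real.rpow_nonneg (jap_pos x).le _
    have hA : jap (|τ| - a) ^ (-β₁) ≤ jap (τ - a) ^ (-β₁) + jap (τ + a) ^ (-β₁) :=
      jap_abs_le τ a
    have hB : jap (|c - τ| - d) ^ (-β₂) ≤
        jap (τ - (c + d)) ^ (-β₂) + jap (τ - (c - d)) ^ (-β₂) := by
      have h' : τ - (c + d) = τ - c - d := by ring
      have h'' : τ - (c - d) = τ - c + d := by ring
      rw [abs_sub_comm c τ, h', h'']
      exact jap_abs_le (β := β₂) (τ - c) d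
    calc jap (|τ| - a) ^ (-β₁) * jap (|c - τ| - d) ^ (-β₂)
        ≤ (jap (τ - a) ^ (-β₁) + jap (τ + a) ^ (-β₁)) *
          (jap (τ - (c + d)) ^ (-β₂) + jap (τ - (c - d)) ^ (-β₂)) := by
          apply mul_le_mul hA hB (nn2 _) (add_nonneg (nn _) (nn _))
      _ ≤ 2 * (jap (τ - a) ^ (-s) + jap (τ + a) ^ (-s) +
          jap (τ - (c + d)) ^ (-s) + jap (τ - (c - d)) ^ (-s)) := by
          have e11 := jap_prod_le h1 h2 (τ - a) (τ - (c + d))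
          have e12 := jap_prod_le h1 h2 (τ - a) (τ - (c - d))
          have e21 := jap_prod_le h1 h2 (τ + a) (τ - (c + d))
          have e22 := jap_prod_le h1 h2 (τ + a) (τ - (c - d))
          nlinarith [nn (τ - a), nn (τ + a), nn2 (τ - (c+d)), nn2 (τ - (c-d))]
  calc ∫⁻ τ : ℝ, ENNReal.ofReal (jap (|τ| - a) ^ (-β₁) * jap (|c - τ| - d) ^ (-β₂))
      ≤ ∫⁻ τ : ℝ, ENNReal.ofReal (2 * (jap (τ - a) ^ (-s) + jap (τ + a) ^ (-s) +
          jap (τ - (c + d)) ^ (-s) + jap (τ - (c - d)) ^ (-s))) :=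
        lintegral_mono fun τ => ENNReal.ofReal_le_ofReal (hpt τ)
    _ = 2 * ((∫⁻ τ : ℝ, ENNReal.ofReal (jap (τ - a) ^ (-s))) +
          (∫⁻ τ : ℝ, ENNReal.ofReal (jap (τ + a) ^ (-s))) +
          (∫⁻ τ : ℝ, ENNReal.ofReal (jap (τ - (c + d)) ^ (-s))) +
          (∫⁻ τ : ℝ, ENNReal.ofReal (jap (τ - (c - d)) ^ (-s)))) := by
        have m1 : Measurable fun τ : ℝ => ENNReal.ofReal (jap (τ - a) ^ (-s)) :=
          hmeas.comp (measurable_id.sub_const a)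
        have m2 : Measurable fun τ : ℝ => ENNReal.ofReal (jap (τ + a) ^ (-s)) :=
          hmeas.comp (measurable_id.add_const a)
        have m3 : Measurable fun τ : ℝ => ENNReal.ofReal (jap (τ - (c + d)) ^ (-s)) :=
          hmeas.comp (measurable_id.sub_const (c + d))
        have m4 : Measurable fun τ : ℝ => ENNReal.ofReal (jap (τ - (c - d)) ^ (-s)) :=
          hmeas.comp (measurable_id.sub_const (c - d))
        have m12 : Measurable fun τ : ℝ => ENNReal.ofReal (jap (τ - a) ^ (-s)) +
            ENNReal.ofReal (jap (τ + a) ^ (-s)) := m1.add m2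
        have m123 : Measurable fun τ : ℝ => ENNReal.ofReal (jap (τ - a) ^ (-s)) +
            ENNReal.ofReal (jap (τ + a) ^ (-s)) +
            ENNReal.ofReal (jap (τ - (c + d)) ^ (-s)) := m12.add m3
        rw [← lintegral_add_left m1, ← lintegral_add_left m12,
          ← lintegral_add_left m123, ← lintegral_const_mul 2]
        · congr 1 with τ
          have nn : ∀ x : ℝ, 0 ≤ jap x ^ (-s) := fun x => Real.rpow_nonneg (jap_pos x).le _
          rw [ENNReal.ofReal_mul (by norm_num),
            ENNReal.ofReal_add (add_nonneg (add_nonneg (nn _) (nn _)) (nn _)) (nn _),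
            ENNReal.ofReal_add (add_nonneg (nn _) (nn _)) (nn _),
            ENNReal.ofReal_add (nn _) (nn _)]
          norm_num
        · exact (((m1.add m2).add m3).add m4)
    _ = 2 * (I + I + I + I) := by
        rw [lintegral_jap_shift s a, lintegral_jap_shift s (c + d), lintegral_jap_shift s (c - d),
          lintegral_add_right_eq_self (fun t => ENNReal.ofReal (jap t ^ (-s))) a]
    _ = 8 * I := by ring

abbrev Sp2 : Type := EuclideanSpace ℝ (Fin 2)

lemma lintegral_jap_2d {β : ℝ} (hβ : 2 < β) :
    ∫⁻ ξ : Sp2, ENNReal.ofReal (jap ‖ξ‖ ^ (-β)) < ∞ := by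
  have h := integrable_rpow_neg_one_add_norm_sq (E := Sp2) (μ := volume)
    (r := β) (by simpa using hβ)
  have h2 : Integrable (fun ξ : Sp2 => jap ‖ξ‖ ^ (-β)) volume := by
    convert h using 2 with ξ
    rw [jap_rpow_eq]
  exact h2.lintegral_lt_top

lemma sp_lemma {γ₁ γ₂ : ℝ} (h1 : 0 ≤ γ₁) (h2 : 0 ≤ γ₂) (hs : 2 < γ₁ + γ₂) :
    ∃ K : ℝ≥0∞, K < ∞ ∧ ∀ w : Sp2,
      ∫⁻ ξ : Sp2, ENNReal.ofReal (jap ‖ξ‖ ^ (-γ₁) * jap ‖w - ξ‖ ^ (-γ₂)) ≤ K := by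
  set s := γ₁ + γ₂ with hsdef
  set I := ∫⁻ ξ : Sp2, ENNReal.ofReal (jap ‖ξ‖ ^ (-s)) with hI
  have hIfin : I < ∞ := lintegral_jap_2d hs
  refine ⟨2 * I, by finiteness, fun w => ?_⟩
  have hmeas : Measurable fun ξ : Sp2 => ENNReal.ofReal (jap ‖ξ‖ ^ (-s)) :=
    ENNReal.measurable_ofReal.comp
      (((continuous_jap_rpow s).comp continuous_norm).measurable)
  calc ∫⁻ ξ : Sp2, ENNReal.ofReal (jap ‖ξ‖ ^ (-γ₁) * jap ‖w - ξ‖ ^ (-γ₂))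
      ≤ ∫⁻ ξ : Sp2, ENNReal.ofReal (jap ‖ξ‖ ^ (-s) + jap ‖w - ξ‖ ^ (-s)) :=
        lintegral_mono fun ξ => ENNReal.ofReal_le_ofReal (jap_prod_le h1 h2 _ _)
    _ = I + ∫⁻ ξ : Sp2, ENNReal.ofReal (jap ‖w - ξ‖ ^ (-s)) := by
        have nn : ∀ x : ℝ, 0 ≤ jap x ^ (-s) := fun x => Real.rpow_nonneg (jap_pos x).le _
        rw [← lintegral_add_left hmeas]
        congr 1 with ξ
        rw [ENNReal.ofReal_add (nn _) (nn _)]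
    _ = I + I := by
        congr 1
        have : ∀ ξ : Sp2, ‖w - ξ‖ = ‖ξ - w‖ := fun ξ => norm_sub_rev w ξ
        simp_rw [this]
        exact lintegral_sub_right_eq_self (fun ξ : Sp2 => ENNReal.ofReal (jap ‖ξ‖ ^ (-s))) w
    _ = 2 * I := by ring

/-- spatial part -/
def spPart (z : SpaceTime) : Sp2 := WithLp.toLp 2 (fun i : Fin 2 => z i.succ)

lemma spPart_apply (z : SpaceTime) (i : Fin 2) : spPart z i = z i.succ := rfl

lemma spNorm_eq (z : SpaceTime) : spNorm z = ‖spPart z‖ := by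
  rw [EuclideanSpace.norm_eq, Fin.sum_univ_two]
  simp only [spPart_apply, Real.norm_eq_abs, sq_abs]
  rfl

lemma spPart_sub (ζ η : SpaceTime) : spPart (ζ - η) = spPart ζ - spPart η := by
  ext i
  simp [spPart_apply]

lemma sub_apply_zero (ζ η : SpaceTime) : (ζ - η) 0 = ζ 0 - η 0 := rfl

def Ψ : ℝ × Sp2 → SpaceTime := fun p =>
  (MeasurableEquiv.toLp 2 (Fin 3 → ℝ))
    ((MeasurableEquiv.piFinSuccAbove (fun _ : Fin 3 => ℝ) 0).symm
      (p.1, (MeasurableEquiv.toLp 2 (Fin 2 → ℝ)).symm p.2))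

lemma measurePreserving_Ψ : MeasurePreserving Ψ volume volume := by
  have h1 : MeasurePreserving (fun p : ℝ × Sp2 => (p.1, (MeasurableEquiv.toLp 2 (Fin 2 → ℝ)).symm p.2))
      volume volume := by
    rw [Measure.volume_eq_prod, Measure.volume_eq_prod]
    exact (MeasurePreserving.id volume).prod (EuclideanSpace.volume_preserving_symm_measurableEquiv_toLp (Fin 2))
  have h2 : MeasurePreserving (MeasurableEquiv.piFinSuccAbove (fun _ : Fin 3 => ℝ) 0).symm
      volume volume := by
    rw [Measure.volume_eq_prod, volume_pi]
    exact (measurePreserving_piFinSuccAbove (fun _ : Fin 3 => (volume : Measure ℝ)) 0).symm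
  have h3 := (EuclideanSpace.volume_preserving_symm_measurableEquiv_toLp (Fin 3)).symm
  exact (h3.comp h2).comp h1

lemma Ψ_apply (τ : ℝ) (ξ : Sp2) (j : Fin 3) :
    Ψ (τ, ξ) j = Fin.insertNth (α := fun _ : Fin 3 => ℝ) 0 τ (fun i => ξ i) j := by
  rfl

lemma Ψ_zero (τ : ℝ) (ξ : Sp2) : Ψ (τ, ξ) 0 = τ := by
  rw [Ψ_apply]
  exact Fin.insertNth_apply_same (α := fun _ : Fin 3 => ℝ) 0 τ _

lemma Ψ_spPart (τ : ℝ) (ξ : Sp2) : spPart (Ψ (τ, ξ)) = ξ := by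
  ext i
  rw [spPart_apply, Ψ_apply]
  have : i.succ = (0 : Fin 3).succAbove i := by simp [Fin.succAbove]
  rw [this, Fin.insertNth_apply_succAbove]

lemma lintegral_spacetime_split (f : SpaceTime → ℝ≥0∞) (hf : Measurable f) :
    ∫⁻ z : SpaceTime, f z = ∫⁻ ξ : Sp2, ∫⁻ τ : ℝ, f (Ψ (τ, ξ)) := by
  rw [← measurePreserving_Ψ.lintegral_comp hf]
  rw [Measure.volume_eq_prod]
  exact lintegral_prod_symm _ ((hf.comp measurePreserving_Ψ.measurable).aemeasurable)

lemma continuous_coord (j : Fin 3) : Continuous fun z : SpaceTime => z j :=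
  (EuclideanSpace.proj j).continuous

lemma continuous_spNorm : Continuous spNorm := by
  unfold spNorm
  exact ((((continuous_coord 1).pow 2).add ((continuous_coord 2).pow 2))).sqrt

lemma kernel_bound {r α₁ α₂ b₁ b₂ : ℝ} (hr0 : 0 < r)
    (hα₁ : 0 ≤ α₁) (hα₂ : 0 ≤ α₂) (hb₁ : 0 ≤ b₁) (hb₂ : 0 ≤ b₂)
    (hsa : 2 < r * α₁ + r * α₂) (hsb : 1 < r * b₁ + r * b₂) :
    ∃ K : ℝ≥0∞, K < ∞ ∧ ∀ ζ : SpaceTime,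
      ∫⁻ η : SpaceTime, ENNReal.ofReal
        ((jap (spNorm η) ^ (-(r * α₁)) * jap (spNorm (ζ - η)) ^ (-(r * α₂))) *
         (jap (|η 0| - spNorm η) ^ (-(r * b₁)) *
          jap (|(ζ - η) 0| - spNorm (ζ - η)) ^ (-(r * b₂)))) ≤ K := by
  obtain ⟨K₁, hK₁f, hK₁⟩ := tau_lemma (by positivity) (by positivity) hsb
  obtain ⟨K₂, hK₂f, hK₂⟩ := sp_lemma (by positivity) (by positivity) hsa
  refine ⟨K₁ * K₂, by finiteness, fun ζ => ?_⟩
  set A : Sp2 → ℝ := fun ξ => jap ‖ξ‖ ^ (-(r * α₁)) * jap ‖spPart ζ - ξ‖ ^ (-(r * α₂)) with hA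
  set B : ℝ → Sp2 → ℝ := fun τ ξ =>
    jap (|τ| - ‖ξ‖) ^ (-(r * b₁)) * jap (|ζ 0 - τ| - ‖spPart ζ - ξ‖) ^ (-(r * b₂)) with hB
  have hAnn : ∀ ξ, 0 ≤ A ξ := fun ξ =>
    mul_nonneg (Real.rpow_nonneg (jap_pos _).le _) (Real.rpow_nonneg (jap_pos _).le _)
  have hg : Measurable fun η : SpaceTime => ENNReal.ofReal
      ((jap (spNorm η) ^ (-(r * α₁)) * jap (spNorm (ζ - η)) ^ (-(r * α₂))) *
       (jap (|η 0| - spNorm η) ^ (-(r * b₁)) *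
        jap (|(ζ - η) 0| - spNorm (ζ - η)) ^ (-(r * b₂)))) := by
    have hsub : Continuous fun η : SpaceTime => ζ - η := (continuous_const.sub continuous_id)
    have c1 : Continuous fun η : SpaceTime => jap (spNorm η) ^ (-(r * α₁)) :=
      (continuous_jap_rpow _).comp continuous_spNorm
    have c2 : Continuous fun η : SpaceTime => jap (spNorm (ζ - η)) ^ (-(r * α₂)) :=
      ((continuous_jap_rpow _).comp continuous_spNorm).comp hsub
    have c3 : Continuous fun η : SpaceTime => jap (|η 0| - spNorm η) ^ (-(r * b₁)) :=
      (continuous_jap_rpow _).comp (((continuous_coord 0).abs).sub continuous_spNorm)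
    have c4 : Continuous fun η : SpaceTime =>
        jap (|(ζ - η) 0| - spNorm (ζ - η)) ^ (-(r * b₂)) :=
      ((continuous_jap_rpow _).comp
        (((continuous_coord 0).abs).sub continuous_spNorm)).comp hsub
    exact ENNReal.measurable_ofReal.comp ((c1.mul c2).mul (c3.mul c4)).measurable
  rw [lintegral_spacetime_split _ hg]
  have key : ∀ ξ : Sp2, (∫⁻ τ : ℝ, ENNReal.ofReal
      ((jap (spNorm (Ψ (τ, ξ))) ^ (-(r * α₁)) *
        jap (spNorm (ζ - Ψ (τ, ξ))) ^ (-(r * α₂))) *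
       (jap (|Ψ (τ, ξ) 0| - spNorm (Ψ (τ, ξ))) ^ (-(r * b₁)) *
        jap (|(ζ - Ψ (τ, ξ)) 0| - spNorm (ζ - Ψ (τ, ξ))) ^ (-(r * b₂)))))
      ≤ ENNReal.ofReal (A ξ) * K₁ := by
    intro ξ
    have coords : ∀ τ : ℝ, spNorm (Ψ (τ, ξ)) = ‖ξ‖ ∧
        spNorm (ζ - Ψ (τ, ξ)) = ‖spPart ζ - ξ‖ ∧ Ψ (τ, ξ) 0 = τ ∧
        (ζ - Ψ (τ, ξ)) 0 = ζ 0 - τ := fun τ =>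
      ⟨by rw [spNorm_eq, Ψ_spPart], by rw [spNorm_eq, spPart_sub, Ψ_spPart],
        Ψ_zero τ ξ, by rw [sub_apply_zero, Ψ_zero]⟩
    calc _ = ∫⁻ τ : ℝ, ENNReal.ofReal (A ξ) * ENNReal.ofReal (B τ ξ) := by
          apply lintegral_congr
          intro τ
          obtain ⟨e1, e2, e3, e4⟩ := coords τ
          rw [e1, e2, e3, e4, ← ENNReal.ofReal_mul (hAnn ξ)]
      _ = ENNReal.ofReal (A ξ) * ∫⁻ τ : ℝ, ENNReal.ofReal (B τ ξ) :=
          lintegral_const_mul' _ _ ENNReal.ofReal_ne_top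
      _ ≤ ENNReal.ofReal (A ξ) * K₁ := by
          apply mul_le_mul_right
          exact hK₁ ‖ξ‖ (ζ 0) ‖spPart ζ - ξ‖
  calc ∫⁻ ξ : Sp2, ∫⁻ τ : ℝ, _ ≤ ∫⁻ ξ : Sp2, ENNReal.ofReal (A ξ) * K₁ :=
        lintegral_mono key
    _ = (∫⁻ ξ : Sp2, ENNReal.ofReal (A ξ)) * K₁ :=
        lintegral_mul_const' _ _ hK₁f.ne
    _ ≤ K₂ * K₁ := mul_le_mul_left (hK₂ (spPart ζ)) K₁
    _ = K₁ * K₂ := mul_comm _ _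

open Function in
open scoped RealInnerProductSpace in
lemma fourier_mul (u v : SchwartzMap SpaceTime ℂ) (ζ : SpaceTime) :
    𝓕 (fun z => u z * v z) ζ = ∫ η : SpaceTime, 𝓕 (⇑u) η * 𝓕 (⇑v) (ζ - η) := by
  have hFu : Integrable (𝓕 ⇑u) volume := by
    have := (SchwartzMap.fourierTransformCLM ℂ u).integrable (μ := volume)
    rwa [SchwartzMap.fourierTransformCLM_apply] at this
  have hinv : ∀ x : SpaceTime, u x = ∫ η : SpaceTime, (𝐞 ⟪η, x⟫ : ℂ) * 𝓕 (⇑u) η := by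
    intro x
    conv_lhs => rw [← Continuous.fourierInv_fourier_eq u.continuous (u.integrable) hFu]
    rw [Real.fourierInv_eq]
    simp_rw [Circle.smul_def, smul_eq_mul]
  have hcirc : ∀ t : ℝ, ‖(𝐞 t : ℂ)‖ = 1 := fun t => by
    exact Circle.norm_coe _
  -- the uncurried integrand
  set F : SpaceTime → SpaceTime → ℂ := fun x η =>
    (𝐞 (-⟪x, ζ⟫) : ℂ) * ((𝐞 ⟪η, x⟫ : ℂ) * 𝓕 (⇑u) η * v x) with hF
  have hFcont : Continuous (uncurry F) := by
    have hc : Continuous fun t : ℝ => (𝐞 t : ℂ) :=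
      continuous_subtype_val.comp Real.continuous_fourierChar
    have h1 : Continuous fun p : SpaceTime × SpaceTime => (𝐞 (-⟪p.1, ζ⟫) : ℂ) :=
      hc.comp ((continuous_fst.inner continuous_const).neg)
    have h2 : Continuous fun p : SpaceTime × SpaceTime => (𝐞 ⟪p.2, p.1⟫ : ℂ) :=
      hc.comp (continuous_snd.inner continuous_fst)
    have h3 : Continuous (𝓕 ⇑u) := by
      rw [← SchwartzMap.fourier_coe]
      exact (SchwartzMap.fourierTransformCLM ℂ u).continuous
    exact h1.mul ((h2.mul (h3.comp continuous_snd)).mul (v.continuous.comp continuous_fst))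
  have hFint : Integrable (uncurry F) (volume.prod volume) := by
    have hbound : Integrable (fun p : SpaceTime × SpaceTime => ‖v p.1‖ * ‖𝓕 (⇑u) p.2‖)
        (volume.prod volume) := (v.integrable.norm).mul_prod hFu.norm
    apply hbound.mono' hFcont.aestronglyMeasurable
    filter_upwards with p
    simp only [uncurry]
    rw [hF]
    rw [norm_mul, norm_mul, norm_mul, hcirc, hcirc, one_mul, one_mul]
    exact le_of_eq (mul_comm _ _)
  calc 𝓕 (fun z => u z * v z) ζ
      = ∫ x : SpaceTime, (𝐞 (-⟪x, ζ⟫) : ℂ) * (u x * v x) := by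
        rw [Real.fourier_eq]; simp_rw [Circle.smul_def, smul_eq_mul]
    _ = ∫ x : SpaceTime, ∫ η : SpaceTime, F x η := by
        apply integral_congr_ae; filter_upwards with x
        rw [hinv x, ← integral_mul_const, ← integral_const_mul]
    _ = ∫ η : SpaceTime, ∫ x : SpaceTime, F x η := integral_integral_swap hFint
    _ = ∫ η : SpaceTime, 𝓕 (⇑u) η * 𝓕 (⇑v) (ζ - η) := by
        apply integral_congr_ae; filter_upwards with η
        have four_eq : 𝓕 (⇑v) (ζ - η) = ∫ x : SpaceTime, (𝐞 (-⟪x, ζ - η⟫) : ℂ) * v x := by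
          rw [Real.fourier_eq]; simp_rw [Circle.smul_def, smul_eq_mul]
        rw [four_eq, ← integral_const_mul]
        apply integral_congr_ae; filter_upwards with x
        rw [hF]
        have key : (𝐞 (-⟪x, ζ⟫) : ℂ) * (𝐞 ⟪η, x⟫ : ℂ) = (𝐞 (-⟪x, ζ - η⟫) : ℂ) := by
          rw [← Circle.coe_mul, ← AddChar.map_add_eq_mul]
          congr 2
          rw [inner_sub_right, real_inner_comm η x]
          ring
        calc (𝐞 (-⟪x, ζ⟫) : ℂ) * ((𝐞 ⟪η, x⟫ : ℂ) * 𝓕 (⇑u) η * v x)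
            = ((𝐞 (-⟪x, ζ⟫) : ℂ) * (𝐞 ⟪η, x⟫ : ℂ)) * 𝓕 (⇑u) η * v x := by ring
          _ = 𝓕 (⇑u) η * ((𝐞 (-⟪x, ζ - η⟫) : ℂ) * v x) := by rw [key]; ring

lemma weight_rpow {r a b A B : ℝ} (hA : 0 < A) (hB : 0 < B) :
    ((A ^ a * B ^ b)⁻¹) ^ r = A ^ (-(r * a)) * B ^ (-(r * b)) := by
  have h1 : (A ^ a * B ^ b)⁻¹ = A ^ (-a) * B ^ (-b) := by
    rw [Real.rpow_neg hA.le, Real.rpow_neg hB.le, mul_inv]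
  rw [h1, Real.mul_rpow (Real.rpow_nonneg hA.le _) (Real.rpow_nonneg hB.le _),
    ← Real.rpow_mul hA.le, ← Real.rpow_mul hB.le]
  ring_nf

/-- rewrite of the H-norm as a concrete lintegral -/
lemma HNorm_eq {r : ℝ} (hr1 : 1 < r) (s b : ℝ) (f : SpaceTime → ℂ) :
    HNorm r s b f = (∫⁻ z : SpaceTime,
      (ENNReal.ofReal (jap (spNorm z) ^ s * jap (|z 0| - spNorm z) ^ b) *
        (‖𝓕 f z‖₊ : ℝ≥0∞)) ^ (r / (r - 1))) ^ (1 / (r / (r - 1))) := by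
  have hq0 : (0:ℝ) < r / (r - 1) := by
    apply div_pos (by linarith) (by linarith)
  have h0 : dualExp r ≠ 0 := by
    simp only [dualExp, ne_eq, ENNReal.ofReal_eq_zero, not_le]; exact hq0
  have htop : dualExp r ≠ ∞ := ENNReal.ofReal_ne_top
  rw [HNorm, eLpNorm_eq_lintegral_rpow_enorm_toReal h0 htop]
  have htr : (dualExp r).toReal = r / (r - 1) := ENNReal.toReal_ofReal hq0.le
  rw [htr]
  congr 1
  apply lintegral_congr
  intro z
  congr 1
  rw [enorm_eq_nnnorm, nnnorm_mul, ENNReal.coe_mul, Complex.nnnorm_real, ← enorm_eq_nnnorm,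
    Real.enorm_eq_ofReal]
  exact (mul_pos (Real.rpow_pos_of_pos (jap_pos _) _)
    (Real.rpow_pos_of_pos (jap_pos _) _)).le


/-- Lemma 3.4: bilinear product estimate in Fourier-Lebesgue wave-Sobolev spaces. -/
theorem bilinear_estimate_Sobolev (r α₁ α₂ b₁ b₂ : ℝ) (hr1 : 1 < r) (hr2 : r ≤ 2)
    (hα₁ : 0 ≤ α₁) (hα₂ : 0 ≤ α₂) (hb₁ : 0 ≤ b₁) (hb₂ : 0 ≤ b₂)
    (hsum : 2 / r < α₁ + α₂) (hbsum : 1 / r < b₁ + b₂) :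
    ∃ C : ℝ≥0, ∀ u v : SchwartzMap SpaceTime ℂ,
      HNorm r 0 0 (fun z => u z * v z) ≤
        C * HNorm r α₁ b₁ ⇑u * HNorm r α₂ b₂ ⇑v := by
  have hr0 : (0:ℝ) < r := by linarith
  set q : ℝ := r / (r - 1) with hqdef
  have hconj : r.HolderConjugate q := (Real.holderConjugate_iff_eq_conjExponent hr1).2 rfl
  have hq1 : 1 < q := hconj.symm.lt
  have hq0 : (0:ℝ) < q := by linarith
  have hsa : 2 < r * α₁ + r * α₂ := by
    rw [div_lt_iff₀ hr0] at hsum; nlinarith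
  have hsb : 1 < r * b₁ + r * b₂ := by
    rw [div_lt_iff₀ hr0] at hbsum; nlinarith
  obtain ⟨K, hKfin, hK⟩ := kernel_bound hr0 hα₁ hα₂ hb₁ hb₂ hsa hsb
  have hKr_ne_top : K ^ (1/r) ≠ ∞ := ENNReal.rpow_ne_top_of_nonneg (by positivity) hKfin.ne
  refine ⟨(K ^ (1/r)).toNNReal, fun u v => ?_⟩
  have hC : ((K ^ (1/r)).toNNReal : ℝ≥0∞) = K ^ (1/r) := ENNReal.coe_toNNReal hKr_ne_top
  rw [hC]
  -- weights and Fourier data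
  set w₁ : SpaceTime → ℝ := fun z => jap (spNorm z) ^ α₁ * jap (|z 0| - spNorm z) ^ b₁ with hw₁
  set w₂ : SpaceTime → ℝ := fun z => jap (spNorm z) ^ α₂ * jap (|z 0| - spNorm z) ^ b₂ with hw₂
  have hw₁pos : ∀ z, 0 < w₁ z := fun z =>
    mul_pos (Real.rpow_pos_of_pos (jap_pos _) _) (Real.rpow_pos_of_pos (jap_pos _) _)
  have hw₂pos : ∀ z, 0 < w₂ z := fun z =>
    mul_pos (Real.rpow_pos_of_pos (jap_pos _) _) (Real.rpow_pos_of_pos (jap_pos _) _)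
  set W₁ : SpaceTime → ℝ≥0∞ := fun z => ENNReal.ofReal (w₁ z) with hW₁
  set W₂ : SpaceTime → ℝ≥0∞ := fun z => ENNReal.ofReal (w₂ z) with hW₂
  set Fu : SpaceTime → ℝ≥0∞ := fun z => (‖𝓕 (⇑u) z‖₊ : ℝ≥0∞) with hFu
  set Fv : SpaceTime → ℝ≥0∞ := fun z => (‖𝓕 (⇑v) z‖₊ : ℝ≥0∞) with hFv
  set H₁ : SpaceTime → ℝ≥0∞ := fun z => W₁ z * Fu z with hH₁
  set H₂ : SpaceTime → ℝ≥0∞ := fun z => W₂ z * Fv z with hH₂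
  -- continuity and measurability
  have hwcont : ∀ a b : ℝ, Continuous fun z : SpaceTime =>
      jap (spNorm z) ^ a * jap (|z 0| - spNorm z) ^ b := by
    intro a b
    have c1 : Continuous fun z : SpaceTime => jap (spNorm z) :=
      continuous_jap.comp continuous_spNorm
    have c2 : Continuous fun z : SpaceTime => jap (|z 0| - spNorm z) :=
      continuous_jap.comp (((continuous_coord 0).abs).sub continuous_spNorm)
    exact (c1.rpow_const fun z => Or.inl (jap_pos _).ne').mul
      (c2.rpow_const fun z => Or.inl (jap_pos _).ne')
  have hW₁meas : Measurable W₁ := ENNReal.measurable_ofReal.comp (hwcont α₁ b₁).measurable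
  have hW₂meas : Measurable W₂ := ENNReal.measurable_ofReal.comp (hwcont α₂ b₂).measurable
  have hFucont : Continuous (𝓕 ⇑u) := by
    rw [← SchwartzMap.fourier_coe]
    exact (SchwartzMap.fourierTransformCLM ℂ u).continuous
  have hFvcont : Continuous (𝓕 ⇑v) := by
    rw [← SchwartzMap.fourier_coe]
    exact (SchwartzMap.fourierTransformCLM ℂ v).continuous
  have hFumeas : Measurable Fu := measurable_coe_nnreal_ennreal.comp hFucont.nnnorm.measurable
  have hFvmeas : Measurable Fv := measurable_coe_nnreal_ennreal.comp hFvcont.nnnorm.measurable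
  have hH₁meas : Measurable H₁ := hW₁meas.mul hFumeas
  have hH₂meas : Measurable H₂ := hW₂meas.mul hFvmeas
  -- step 1 + 2 : pointwise bound on the Fourier transform of the product
  have main : ∀ ζ : SpaceTime, (‖𝓕 (fun z => u z * v z) ζ‖₊ : ℝ≥0∞) ≤
      K ^ (1/r) * (∫⁻ η, (H₁ η * H₂ (ζ - η)) ^ q) ^ (1/q) := by
    intro ζ
    have step1 : (‖𝓕 (fun z => u z * v z) ζ‖₊ : ℝ≥0∞) ≤ ∫⁻ η, Fu η * Fv (ζ - η) := by
      rw [fourier_mul u v ζ]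
      refine le_trans (enorm_integral_le_lintegral_enorm _) (le_of_eq ?_)
      apply lintegral_congr
      intro η
      rw [enorm_mul, enorm_eq_nnnorm, enorm_eq_nnnorm]
    -- Hölder
    set φ : SpaceTime → ℝ≥0∞ := fun η => (W₁ η * W₂ (ζ - η))⁻¹ with hφ
    set ψ : SpaceTime → ℝ≥0∞ := fun η => H₁ η * H₂ (ζ - η) with hψ
    have hWne : ∀ η, W₁ η * W₂ (ζ - η) ≠ 0 := by
      intro η
      apply mul_ne_zero <;>
        simp only [hW₁, hW₂, ne_eq, ENNReal.ofReal_eq_zero, not_le] <;>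
        [exact hw₁pos η; exact hw₂pos (ζ - η)]
    have hWnt : ∀ η, W₁ η * W₂ (ζ - η) ≠ ∞ := fun η =>
      ENNReal.mul_ne_top ENNReal.ofReal_ne_top ENNReal.ofReal_ne_top
    have hfactor : ∀ η, Fu η * Fv (ζ - η) = φ η * ψ η := by
      intro η
      have : ψ η = (W₁ η * W₂ (ζ - η)) * (Fu η * Fv (ζ - η)) := by
        simp only [hψ, hH₁, hH₂]; ring
      rw [this, hφ, ← mul_assoc, ENNReal.inv_mul_cancel (hWne η) (hWnt η), one_mul]
    have hφmeas : Measurable φ := by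
      apply Measurable.inv
      exact hW₁meas.mul (hW₂meas.comp (measurable_const.sub measurable_id))
    have hψmeas : Measurable ψ :=
      hH₁meas.mul (hH₂meas.comp (measurable_const.sub measurable_id))
    have holder : ∫⁻ η, Fu η * Fv (ζ - η) ≤
        (∫⁻ η, φ η ^ r) ^ (1/r) * (∫⁻ η, ψ η ^ q) ^ (1/q) := by
      rw [lintegral_congr hfactor]
      exact ENNReal.lintegral_mul_le_Lp_mul_Lq volume hconj hφmeas.aemeasurable
        hψmeas.aemeasurable
    have hker : (∫⁻ η, φ η ^ r) ≤ K := by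
      refine le_trans (le_of_eq (lintegral_congr fun η => ?_)) (hK ζ)
      show (W₁ η * W₂ (ζ - η))⁻¹ ^ r = _
      have h1 : (W₁ η * W₂ (ζ - η)) = ENNReal.ofReal (w₁ η * w₂ (ζ - η)) := by
        rw [ENNReal.ofReal_mul (hw₁pos η).le]
      rw [h1, ← ENNReal.ofReal_inv_of_pos (mul_pos (hw₁pos η) (hw₂pos (ζ - η))),
        ENNReal.ofReal_rpow_of_pos (inv_pos.mpr (mul_pos (hw₁pos η) (hw₂pos (ζ - η))))]
      congr 1
      have e1 : (w₁ η * w₂ (ζ - η))⁻¹ ^ r = (w₁ η)⁻¹ ^ r * (w₂ (ζ - η))⁻¹ ^ r := by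
        rw [mul_inv, Real.mul_rpow (inv_nonneg.mpr (hw₁pos η).le) (inv_nonneg.mpr (hw₂pos (ζ - η)).le)]
      rw [e1, hw₁, hw₂]
      rw [weight_rpow (jap_pos _) (jap_pos _), weight_rpow (jap_pos _) (jap_pos _)]
      ring
    calc (‖𝓕 (fun z => u z * v z) ζ‖₊ : ℝ≥0∞)
        ≤ ∫⁻ η, Fu η * Fv (ζ - η) := step1
      _ ≤ (∫⁻ η, φ η ^ r) ^ (1/r) * (∫⁻ η, ψ η ^ q) ^ (1/q) := holder
      _ ≤ K ^ (1/r) * (∫⁻ η, ψ η ^ q) ^ (1/q) := by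
          apply mul_le_mul_left
          exact ENNReal.rpow_le_rpow hker (by positivity)
  -- step 3 : take L^q norms
  have hq_ne : q ≠ 0 := hq0.ne'
  have LHS_eq : HNorm r 0 0 (fun z => u z * v z) =
      (∫⁻ ζ, ((‖𝓕 (fun z => u z * v z) ζ‖₊ : ℝ≥0∞)) ^ q) ^ (1/q) := by
    rw [HNorm_eq hr1]
    congr 1
    apply lintegral_congr
    intro ζ
    congr 2
    rw [Real.rpow_zero, Real.rpow_zero, one_mul, ENNReal.ofReal_one, one_mul]
  have RHS₁ : HNorm r α₁ b₁ ⇑u = (∫⁻ z, H₁ z ^ q) ^ (1/q) := HNorm_eq hr1 α₁ b₁ ⇑u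
  have RHS₂ : HNorm r α₂ b₂ ⇑v = (∫⁻ z, H₂ z ^ q) ^ (1/q) := HNorm_eq hr1 α₂ b₂ ⇑v
  -- Fubini for the weighted product
  have fub : ∫⁻ ζ, ∫⁻ η, (H₁ η * H₂ (ζ - η)) ^ q =
      (∫⁻ z, H₁ z ^ q) * (∫⁻ z, H₂ z ^ q) := by
    have hmeas2 : Measurable fun p : SpaceTime × SpaceTime =>
        (H₁ p.2) ^ q * (H₂ (p.1 - p.2)) ^ q := by
      apply Measurable.mul
      · exact ((hH₁meas.comp measurable_snd).pow_const _)
      · exact ((hH₂meas.comp (measurable_fst.sub measurable_snd)).pow_const _)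
    calc ∫⁻ ζ, ∫⁻ η, (H₁ η * H₂ (ζ - η)) ^ q
        = ∫⁻ ζ, ∫⁻ η, (H₁ η) ^ q * (H₂ (ζ - η)) ^ q := by
          apply lintegral_congr; intro ζ; apply lintegral_congr; intro η
          rw [ENNReal.mul_rpow_of_nonneg _ _ hq0.le]
      _ = ∫⁻ η, ∫⁻ ζ, (H₁ η) ^ q * (H₂ (ζ - η)) ^ q :=
          lintegral_lintegral_swap hmeas2.aemeasurable
      _ = ∫⁻ η, (H₁ η) ^ q * ∫⁻ ζ, (H₂ (ζ - η)) ^ q := by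
          apply lintegral_congr; intro η
          exact lintegral_const_mul'' _ ((hH₂meas.comp
            (measurable_id.sub_const η)).pow_const _).aemeasurable
      _ = ∫⁻ η, (H₁ η) ^ q * ∫⁻ z, H₂ z ^ q := by
          apply lintegral_congr; intro η
          congr 1
          exact lintegral_sub_right_eq_self (fun z => H₂ z ^ q) η
      _ = (∫⁻ z, H₁ z ^ q) * (∫⁻ z, H₂ z ^ q) :=
          lintegral_mul_const'' _ ((hH₁meas.pow_const _)).aemeasurable
  -- put everything together
  rw [LHS_eq, RHS₁, RHS₂]
  calc (∫⁻ ζ, ((‖𝓕 (fun z => u z * v z) ζ‖₊ : ℝ≥0∞)) ^ q) ^ (1/q)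
      ≤ (∫⁻ ζ, (K ^ (1/r) * (∫⁻ η, (H₁ η * H₂ (ζ - η)) ^ q) ^ (1/q)) ^ q) ^ (1/q) := by
        apply ENNReal.rpow_le_rpow _ (by positivity)
        apply lintegral_mono
        intro ζ
        exact ENNReal.rpow_le_rpow (main ζ) hq0.le
    _ = (K ^ (q/r) * ∫⁻ ζ, ∫⁻ η, (H₁ η * H₂ (ζ - η)) ^ q) ^ (1/q) := by
        congr 1
        rw [← lintegral_const_mul' _ _ (ENNReal.rpow_ne_top_of_nonneg (by positivity) hKfin.ne)]
        apply lintegral_congr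
        intro ζ
        rw [ENNReal.mul_rpow_of_nonneg _ _ hq0.le, ← ENNReal.rpow_mul, ← ENNReal.rpow_mul,
          one_div_mul_cancel hq_ne, ENNReal.rpow_one]
        congr 2
        field_simp
        try ring
    _ = K ^ (1/r) * ((∫⁻ z, H₁ z ^ q) * (∫⁻ z, H₂ z ^ q)) ^ (1/q) := by
        rw [fub, ENNReal.mul_rpow_of_nonneg _ _ (by positivity : (0:ℝ) ≤ 1/q),
          ← ENNReal.rpow_mul]
        congr 2
        field_simp
        try ring
    _ = K ^ (1/r) * (∫⁻ z, H₁ z ^ q) ^ (1/q) * (∫⁻ z, H₂ z ^ q) ^ (1/q) := by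
        rw [ENNReal.mul_rpow_of_nonneg _ _ (by positivity : (0:ℝ) ≤ 1/q), mul_assoc]
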